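/- arXiv:2403.19457 — 4 statements merged into one kernel-verified Lean document; each statement's English description precedes it below -/
import Mathlib

section
/- The Gaussian Q-function admits the Craig representation: for all x ≥ 0, Q(x) = (1/π) ∫₀^{π/2} exp(−x²/(2 sin²θ)) dθ, where Q(x) = ∫ₓ^∞ (1/√(2π)) exp(−t²/2) dt. -/
open Real MeasureTheory Set

lemma gauss_integrable : MeasureTheory.Integrable (fun t : ℝ => Real.exp (-t ^ 2 / 2)) := by
  have h : ∀ t : ℝ, -t ^ 2 / 2 = -((1:ℝ)/2) * t ^ 2 := fun t => by ring
  simp only [h]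
  exact integrable_exp_neg_mul_sq (by norm_num)

lemma gauss_Ioi : ∫ u in Ioi (0:ℝ), Real.exp (-u ^ 2 / 2) = Real.sqrt (2 * π) / 2 := by
  have h : ∀ t : ℝ, -t ^ 2 / 2 = -((1:ℝ)/2) * t ^ 2 := fun t => by ring
  simp only [h]
  rw [integral_gaussian_Ioi, show π / ((1:ℝ)/2) = 2 * π by ring]

lemma Qfun_eq (x : ℝ) :
    (∫ t in Set.Ici x, (1 / Real.sqrt (2 * π)) * Real.exp (-t ^ 2 / 2))
      = (∫ t : ℝ, (1 / Real.sqrt (2 * π)) * Real.exp (-t ^ 2 / 2))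
        - ((∫ t in Iic (0:ℝ), (1 / Real.sqrt (2 * π)) * Real.exp (-t ^ 2 / 2))
          + ∫ t in (0:ℝ)..x, (1 / Real.sqrt (2 * π)) * Real.exp (-t ^ 2 / 2)) := by
  have hint : MeasureTheory.Integrable
      (fun t : ℝ => (1 / Real.sqrt (2 * π)) * Real.exp (-t ^ 2 / 2)) :=
    gauss_integrable.const_mul _
  rw [← intervalIntegral.integral_Iic_sub_Iic hint.integrableOn hint.integrableOn,
    MeasureTheory.integral_Ici_eq_integral_Ioi,
    ← intervalIntegral.integral_Iic_add_Ioi (b := x) hint.integrableOn hint.integrableOn]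
  ring

lemma image_arctan {x : ℝ} (hx : 0 < x) :
    (fun u : ℝ => Real.arctan (x / u)) '' (Ioi 0) = Ioo 0 (π/2) := by
  ext θ
  constructor
  · rintro ⟨u, hu, rfl⟩
    have hu' : (0:ℝ) < u := hu
    have hv : 0 < x / u := div_pos hx hu'
    have : Real.arctan 0 < Real.arctan (x / u) := Real.arctan_strictMono hv
    rw [Real.arctan_zero] at this
    exact ⟨this, Real.arctan_lt_pi_div_two _⟩
  · rintro ⟨h1, h2⟩
    have ht : 0 < Real.tan θ := Real.tan_pos_of_pos_of_lt_pi_div_two h1 h2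
    refine ⟨x / Real.tan θ, div_pos hx ht, ?_⟩
    simp only
    rw [show x / (x / Real.tan θ) = Real.tan θ from by field_simp, Real.arctan_tan (by linarith [Real.pi_pos]) h2]

lemma subst_integral {x : ℝ} (hx : 0 < x) :
    ∫ θ in Ioo (0:ℝ) (π/2), (x / Real.sin θ ^ 2) * Real.exp (-x^2 / (2 * Real.sin θ ^ 2))
      = Real.exp (-x^2/2) * (Real.sqrt (2*π)/2) := by
  have hderiv : ∀ u ∈ Ioi (0:ℝ),
      HasDerivWithinAt (fun u : ℝ => Real.arctan (x / u)) (-(x/(x^2+u^2))) (Ioi 0) u := by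
    intro u hu
    have hu' : (0:ℝ) < u := hu
    have h1 : HasDerivAt (fun u : ℝ => x / u) (-(x / u^2)) u := by
      have := (hasDerivAt_inv (ne_of_gt hu')).const_mul x
      simpa [div_eq_mul_inv, mul_neg] using this
    have h2 := (Real.hasDerivAt_arctan (x/u)).comp u h1
    have heq : 1 / (1 + (x/u)^2) * (-(x / u^2)) = -(x/(x^2+u^2)) := by
      field_simp
      ring
    rw [heq] at h2
    exact h2.hasDerivWithinAt
  have hinj : InjOn (fun u : ℝ => Real.arctan (x / u)) (Ioi 0) := by
    intro a ha b hb h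
    have h' := Real.arctan_injective h
    have ha' : (0:ℝ) < a := ha
    have hb' : (0:ℝ) < b := hb
    field_simp at h'
    exact h'.symm
  have key := integral_image_eq_integral_abs_deriv_smul measurableSet_Ioi hderiv hinj
    (fun θ => (x / Real.sin θ ^ 2) * Real.exp (-x^2 / (2 * Real.sin θ ^ 2)))
  rw [image_arctan hx] at key
  rw [key]
  have hcongr : EqOn
      (fun u : ℝ => |(-(x/(x^2+u^2)))| • ((x / Real.sin (Real.arctan (x/u)) ^ 2)
        * Real.exp (-x^2 / (2 * Real.sin (Real.arctan (x/u)) ^ 2))))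
      (fun u : ℝ => Real.exp (-x^2/2) * Real.exp (-u^2/2)) (Ioi 0) := by
    intro u hu
    have hu' : (0:ℝ) < u := hu
    have hden : (0:ℝ) < x^2 + u^2 := by positivity
    have hsin : Real.sin (Real.arctan (x/u)) ^ 2 = x^2 / (x^2 + u^2) := by
      rw [Real.sin_arctan, div_pow, sq_sqrt (by positivity)]
      field_simp
      ring
    simp only
    rw [hsin, abs_neg, abs_of_pos (div_pos hx hden), smul_eq_mul,
      show -x^2 / (2 * (x^2/(x^2+u^2))) = -x^2/2 + -u^2/2 by field_simp; ring,
      ← mul_assoc,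
      show x/(x^2+u^2) * (x / (x^2/(x^2+u^2))) = 1 by field_simp,
      one_mul, Real.exp_add]
  rw [setIntegral_congr_fun measurableSet_Ioi hcongr, integral_const_mul, gauss_Ioi]

lemma meas_aux0 (x : ℝ) : Measurable (fun θ : ℝ => Real.exp (-x^2 / (2 * Real.sin θ ^ 2))) :=
  Real.measurable_exp.comp
    (measurable_const.div ((Real.measurable_sin.pow_const 2).const_mul 2))

lemma meas_aux {μ : MeasureTheory.Measure ℝ} (x : ℝ) : AEStronglyMeasurable
    (fun θ : ℝ => Real.exp (-x^2 / (2 * Real.sin θ ^ 2))) μ :=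
  (meas_aux0 x).aestronglyMeasurable

lemma exp_le_one_aux (x θ : ℝ) : ‖Real.exp (-x^2 / (2 * Real.sin θ ^ 2))‖ ≤ 1 := by
  rw [Real.norm_eq_abs, abs_of_pos (Real.exp_pos _), Real.exp_le_one_iff]
  apply div_nonpos_of_nonpos_of_nonneg
  · simp [sq_nonneg]
  · positivity

lemma int_aux (x : ℝ) : IntervalIntegrable
    (fun θ : ℝ => Real.exp (-x^2 / (2 * Real.sin θ ^ 2))) MeasureTheory.volume 0 (π/2) := by
  rw [intervalIntegrable_iff]
  apply MeasureTheory.Measure.integrableOn_of_bounded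
  · rw [← Set.uIoc_comm]; exact (measure_Ioc_lt_top).ne
  · exact meas_aux x
  · exact Filter.Eventually.of_forall (fun θ => exp_le_one_aux x θ)

lemma c_exp_le_one {c : ℝ} (hc : 0 ≤ c) : c * Real.exp (-c) ≤ 1 := by
  rw [Real.exp_neg]
  rw [mul_inv_le_iff₀ (Real.exp_pos c), one_mul]
  linarith [Real.add_one_le_exp c]

lemma hG_deriv {x₀ : ℝ} (hx : 0 < x₀) :
    HasDerivAt (fun x => ∫ θ in (0:ℝ)..(π/2), Real.exp (-x^2/(2*Real.sin θ^2)))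
      (-(Real.exp (-x₀^2/2) * (Real.sqrt (2*π)/2))) x₀ := by
  have hI : Set.uIoc (0:ℝ) (π/2) = Ioc 0 (π/2) := Set.uIoc_of_le (by positivity)
  have main := intervalIntegral.hasDerivAt_integral_of_dominated_loc_of_deriv_le
    (F := fun x θ => Real.exp (-x^2/(2*Real.sin θ^2)))
    (F' := fun x θ => (-(x / Real.sin θ^2)) * Real.exp (-x^2/(2*Real.sin θ^2)))
    (x₀ := x₀) (a := 0) (b := π/2) (μ := MeasureTheory.volume)
    (bound := fun _ => 4 / x₀) (s := Metric.ball x₀ (x₀/2))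
    (Metric.ball_mem_nhds x₀ (half_pos hx))
    (Filter.Eventually.of_forall (fun x => meas_aux x))
    (int_aux x₀)
    ?meas' ?bound ?bint ?diff
  case meas' =>
    apply Measurable.aestronglyMeasurable
    exact ((measurable_const.div (Real.measurable_sin.pow_const 2)).neg).mul
      (Real.measurable_exp.comp
        (measurable_const.div ((Real.measurable_sin.pow_const 2).const_mul 2)))
  case bint => exact intervalIntegrable_const
  case bound =>
    apply Filter.Eventually.of_forall
    intro θ hθ y hy
    rw [hI] at hθ
    have hs : 0 < Real.sin θ ^ 2 := by
      have := Real.sin_pos_of_pos_of_lt_pi hθ.1 (lt_of_le_of_lt hθ.2 (by linarith [Real.pi_pos]))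
      positivity
    have hy' : x₀/2 < y := by
      have := abs_lt.1 (mem_ball_iff_norm.1 hy)
      linarith [this.1]
    have hy0 : 0 < y := lt_trans (half_pos hx) hy'
    have hkey : (y / Real.sin θ^2) * Real.exp (-y^2/(2*Real.sin θ^2)) ≤ 2 / y := by
      have hc : (0:ℝ) ≤ y^2/(2*Real.sin θ^2) := by positivity
      have h1 := c_exp_le_one hc
      have heq : (y / Real.sin θ^2) * Real.exp (-y^2/(2*Real.sin θ^2))
          = (2/y) * ((y^2/(2*Real.sin θ^2)) * Real.exp (-(y^2/(2*Real.sin θ^2)))) := by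
        rw [show -y^2/(2*Real.sin θ^2) = -(y^2/(2*Real.sin θ^2)) by ring]
        field_simp
      rw [heq]
      calc (2/y) * ((y^2/(2*Real.sin θ^2)) * Real.exp (-(y^2/(2*Real.sin θ^2))))
          ≤ (2/y) * 1 := by
            apply mul_le_mul_of_nonneg_left h1 (by positivity)
        _ = 2/y := mul_one _
    rw [Real.norm_eq_abs, abs_mul, abs_neg, abs_of_pos (div_pos hy0 hs),
      abs_of_pos (Real.exp_pos _)]
    calc (y / Real.sin θ^2) * Real.exp (-y^2/(2*Real.sin θ^2)) ≤ 2/y := hkey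
      _ ≤ 4/x₀ := by
          rw [div_le_div_iff₀ hy0 hx]
          nlinarith
  case diff =>
    apply Filter.Eventually.of_forall
    intro θ hθ y hy
    rw [hI] at hθ
    have hs : 0 < Real.sin θ ^ 2 := by
      have := Real.sin_pos_of_pos_of_lt_pi hθ.1 (lt_of_le_of_lt hθ.2 (by linarith [Real.pi_pos]))
      positivity
    have h1 : HasDerivAt (fun y : ℝ => -y^2/(2*Real.sin θ^2)) (-(y / Real.sin θ^2)) y := by
      have := ((hasDerivAt_pow 2 y).neg).div_const (2*Real.sin θ^2)
      refine this.congr_deriv ?_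
      field_simp
      ring
    have := h1.exp
    refine this.congr_deriv ?_
    ring
  -- now compute the value of the integral of F'
  have hval : (∫ θ in (0:ℝ)..(π/2), (-(x₀ / Real.sin θ^2)) * Real.exp (-x₀^2/(2*Real.sin θ^2)))
      = -(Real.exp (-x₀^2/2) * (Real.sqrt (2*π)/2)) := by
    rw [intervalIntegral.integral_of_le (by positivity)]
    rw [MeasureTheory.integral_Ioc_eq_integral_Ioo]
    rw [show (fun θ => (-(x₀ / Real.sin θ^2)) * Real.exp (-x₀^2/(2*Real.sin θ^2)))
        = (fun θ => -((x₀ / Real.sin θ^2) * Real.exp (-x₀^2/(2*Real.sin θ^2)))) from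
        funext fun θ => by ring]
    rw [MeasureTheory.integral_neg]
    rw [show (fun θ => (x₀ / Real.sin θ^2) * Real.exp (-x₀^2/(2*Real.sin θ^2)))
        = (fun θ => (x₀ / Real.sin θ^2) * Real.exp (-x₀^2/(2*Real.sin θ^2))) from rfl]
    rw [subst_integral hx]
  rw [hval] at main
  exact main.2

lemma hG_cont : Continuous (fun x : ℝ => ∫ θ in (0:ℝ)..(π/2), Real.exp (-x^2/(2*Real.sin θ^2))) := by
  have hI : Set.uIoc (0:ℝ) (π/2) = Ioc 0 (π/2) := Set.uIoc_of_le (by positivity)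
  apply intervalIntegral.continuous_of_dominated_interval
    (bound := fun _ => (1:ℝ)) (fun x => meas_aux x)
  · intro x
    exact Filter.Eventually.of_forall (fun θ _ => exp_le_one_aux x θ)
  · exact intervalIntegrable_const
  · apply Filter.Eventually.of_forall
    intro θ hθ
    rw [hI] at hθ
    have hs : 0 < Real.sin θ ^ 2 := by
      have := Real.sin_pos_of_pos_of_lt_pi hθ.1 (lt_of_le_of_lt hθ.2 (by linarith [Real.pi_pos]))
      positivity
    exact Real.continuous_exp.comp (((continuous_pow 2).neg).div_const _)

lemma hQ_deriv (x : ℝ) :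
    HasDerivAt (fun y => ∫ t in Set.Ici y, (1 / Real.sqrt (2 * π)) * Real.exp (-t ^ 2 / 2))
      (-((1 / Real.sqrt (2 * π)) * Real.exp (-x ^ 2 / 2))) x := by
  have hint : MeasureTheory.Integrable
      (fun t : ℝ => (1 / Real.sqrt (2 * π)) * Real.exp (-t ^ 2 / 2)) :=
    gauss_integrable.const_mul _
  have hcont : Continuous (fun t : ℝ => (1 / Real.sqrt (2 * π)) * Real.exp (-t ^ 2 / 2)) :=
    continuous_const.mul ((Real.continuous_exp.comp ((continuous_pow 2).neg.div_const 2)))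
  have h1 : HasDerivAt (fun y => ∫ t in (0:ℝ)..y, (1 / Real.sqrt (2*π)) * Real.exp (-t^2/2))
      ((1 / Real.sqrt (2*π)) * Real.exp (-x^2/2)) x :=
    intervalIntegral.integral_hasDerivAt_right hint.intervalIntegrable
      (hcont.stronglyMeasurable.stronglyMeasurableAtFilter) hcont.continuousAt
  have heq : (fun y => ∫ t in Set.Ici y, (1 / Real.sqrt (2 * π)) * Real.exp (-t ^ 2 / 2))
      = fun y => ((∫ t : ℝ, (1 / Real.sqrt (2 * π)) * Real.exp (-t ^ 2 / 2))
          - (∫ t in Iic (0:ℝ), (1 / Real.sqrt (2 * π)) * Real.exp (-t ^ 2 / 2)))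
        - ∫ t in (0:ℝ)..y, (1 / Real.sqrt (2*π)) * Real.exp (-t^2/2) := by
    funext y
    rw [Qfun_eq]
    ring
  rw [heq]
  exact h1.const_sub _

noncomputable def Qfun (x : ℝ) : ℝ :=
  ∫ t in Set.Ici x, (1 / Real.sqrt (2 * π)) * Real.exp (-t ^ 2 / 2)

theorem stmt_8 (x : ℝ) (hx : 0 ≤ x) :
    Qfun x = (1 / π) * ∫ θ in (0:ℝ)..(π / 2), Real.exp (-x ^ 2 / (2 * Real.sin θ ^ 2)) := by
  have hs : 0 < Real.sqrt (2*π) := Real.sqrt_pos.2 (by positivity)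
  have h2π : Real.sqrt (2*π) ^ 2 = 2*π := Real.sq_sqrt (by positivity)
  set G := fun x : ℝ => ∫ θ in (0:ℝ)..(π/2), Real.exp (-x^2/(2*Real.sin θ^2)) with hGdef
  set f := fun y : ℝ =>
    (∫ t in Set.Ici y, (1 / Real.sqrt (2 * π)) * Real.exp (-t ^ 2 / 2)) - (1/π) * G y
    with hfdef
  have hQcont : Continuous
      (fun y : ℝ => ∫ t in Set.Ici y, (1 / Real.sqrt (2 * π)) * Real.exp (-t ^ 2 / 2)) :=
    continuous_iff_continuousAt.2 fun y => (hQ_deriv y).continuousAt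
  have hfcont : Continuous f := hQcont.sub (continuous_const.mul hG_cont)
  have hf' : ∀ y ∈ interior (Ici (0:ℝ)), HasDerivAt f 0 y := by
    rw [interior_Ici]
    intro y hy
    have h := (hQ_deriv y).sub ((hG_deriv hy).const_mul (1/π))
    refine h.congr_deriv ?_
    have h2 : Real.sqrt 2 ^ 2 = 2 := Real.sq_sqrt (by norm_num)
    have hπ : Real.sqrt π ^ 2 = π := Real.sq_sqrt Real.pi_pos.le
    field_simp
    rw [show -(y^2/2) = -y^2/2 by ring]
    linear_combination Real.exp (-y^2/2) * h2π
  have hmono := monotoneOn_of_deriv_nonneg (convex_Ici 0) hfcont.continuousOn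
      (fun y hy => (hf' y hy).differentiableAt.differentiableWithinAt)
      (fun y hy => (hf' y hy).deriv.ge)
  have hanti := antitoneOn_of_deriv_nonpos (convex_Ici 0) hfcont.continuousOn
      (fun y hy => (hf' y hy).differentiableAt.differentiableWithinAt)
      (fun y hy => (hf' y hy).deriv.le)
  have hQ0 : (∫ t in Set.Ici (0:ℝ), (1 / Real.sqrt (2 * π)) * Real.exp (-t ^ 2 / 2))
      = 1/2 := by
    rw [MeasureTheory.integral_Ici_eq_integral_Ioi, MeasureTheory.integral_const_mul, gauss_Ioi]
    field_simp
  have hG0 : G 0 = π/2 := by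
    rw [hGdef]
    simp only
    rw [show (fun θ : ℝ => Real.exp (-(0:ℝ)^2/(2*Real.sin θ^2))) = fun _ => (1:ℝ) from
      funext fun θ => by norm_num]
    simp
  have hf0 : f 0 = 0 := by
    rw [hfdef]
    simp only
    rw [hQ0, hG0]
    field_simp
    ring
  have h1 := hmono (self_mem_Ici) (hx : x ∈ Ici (0:ℝ)) hx
  have h2 := hanti (self_mem_Ici) (hx : x ∈ Ici (0:ℝ)) hx
  have hfx : f x = 0 := le_antisymm (by linarith) (by linarith)
  rw [hfdef] at hfx
  simp only at hfx
  show (∫ t in Set.Ici x, (1 / Real.sqrt (2 * π)) * Real.exp (-t ^ 2 / 2)) = _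
  rw [hGdef] at hfx
  simp only at hfx
  linarith [hfx]
end

section
/- For any a > 0 and positive integer N_r, (1/π) ∫₀^{π/2} (4 sin²θ / (4 sin²θ + a))^{N_r} dθ = μ^{N_r} · Σ_{k=0}^{N_r−1} C(N_r−1+k, k) (1 − μ)^k, where μ = (1/2)(1 − √(a/(4+a))). -/
open Real

theorem base_int (c : ℝ) (hc : 0 < c) :
    ∫ θ in (0:ℝ)..(π/2), 1 / (Real.sin θ ^ 2 + c) =
      π / (2 * Real.sqrt (c * (1 + c))) := by
  set p := Real.sqrt (1 + c) with hp
  set q := Real.sqrt c with hq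
  have hp0 : 0 < p := Real.sqrt_pos.2 (by linarith)
  have hq0 : 0 < q := Real.sqrt_pos.2 hc
  have hp2 : p ^ 2 = 1 + c := Real.sq_sqrt (by linarith)
  have hq2 : q ^ 2 = c := Real.sq_sqrt hc.le
  have key : ∀ θ : ℝ, HasDerivAt
      (fun θ => (1/(p*q)) * (θ + Real.arctan ((p-q) * Real.sin θ * Real.cos θ /
        (q * Real.cos θ ^ 2 + p * Real.sin θ ^ 2))))
      (1 / (Real.sin θ ^ 2 + c)) θ := by
    intro θ
    have hsc : Real.sin θ ^ 2 + Real.cos θ ^ 2 = 1 := Real.sin_sq_add_cos_sq θ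
    have hDn : 0 < q * Real.cos θ ^ 2 + p * Real.sin θ ^ 2 := by
      nlinarith [mul_nonneg hq0.le (sq_nonneg (Real.cos θ)), mul_nonneg hp0.le (sq_nonneg (Real.sin θ)), mul_nonneg hq0.le (sq_nonneg (Real.sin θ)), mul_nonneg hp0.le (sq_nonneg (Real.cos θ))]
    have hN : HasDerivAt (fun θ => (p-q) * Real.sin θ * Real.cos θ)
        ((p-q) * Real.cos θ * Real.cos θ + (p-q) * Real.sin θ * -Real.sin θ) θ :=
      (((Real.hasDerivAt_sin θ).const_mul (p-q)).mul (Real.hasDerivAt_cos θ))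
    have hD : HasDerivAt (fun θ => q * Real.cos θ ^ 2 + p * Real.sin θ ^ 2)
        (q * ((2:ℕ) * Real.cos θ ^ 1 * -Real.sin θ) + p * ((2:ℕ) * Real.sin θ ^ 1 * Real.cos θ)) θ :=
      ((((Real.hasDerivAt_cos θ).pow 2).const_mul q).add
        (((Real.hasDerivAt_sin θ).pow 2).const_mul p))
    have hw := hN.div hD hDn.ne'
    have harctan := hw.arctan
    have hfull := ((hasDerivAt_id θ).add harctan).const_mul (1/(p*q))
    refine hfull.congr_deriv ?_; symm
    have h1 : (0:ℝ) < Real.sin θ ^ 2 + c := by positivity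
    have h2 : (0:ℝ) < 1 + ((p-q) * Real.sin θ * Real.cos θ /
        (q * Real.cos θ ^ 2 + p * Real.sin θ ^ 2)) ^ 2 := by positivity
    have hcos : Real.cos θ ^ 2 = 1 - Real.sin θ ^ 2 := by linarith
    have hE : (q * Real.cos θ ^ 2 + p * Real.sin θ ^ 2) ^ 2 + ((p - q) * Real.sin θ * Real.cos θ) ^ 2 = Real.sin θ ^ 2 + c := by
      linear_combination (q^2*(Real.cos θ^2 + 1 - Real.sin θ^2) + 2*p*q*Real.sin θ^2 + (p-q)^2*Real.sin θ^2) * hcos + (1 - Real.sin θ^2) * hq2 + Real.sin θ^2 * hp2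
    have hF : ((p - q) * Real.cos θ * Real.cos θ + (p - q) * Real.sin θ * -Real.sin θ) * (q * Real.cos θ ^ 2 + p * Real.sin θ ^ 2) - (p - q) * Real.sin θ * Real.cos θ * (q * ((2:ℕ) * Real.cos θ ^ 1 * -Real.sin θ) + p * ((2:ℕ) * Real.sin θ ^ 1 * Real.cos θ)) = (p-q)*(q-(p+q)*Real.sin θ^2) := by
      push_cast
      linear_combination (p-q)*(q*(Real.cos θ^2 + 1 - Real.sin θ^2) + (q-p)*Real.sin θ^2) * hcos
    have hD2 : q * Real.cos θ ^ 2 + p * Real.sin θ ^ 2 ≠ 0 := hDn.ne'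
    have e1 : 1 + ((fun θ => (p-q)*Real.sin θ*Real.cos θ) / fun θ => q*Real.cos θ^2+p*Real.sin θ^2) θ ^ 2 = (Real.sin θ^2 + c)/(q*Real.cos θ^2+p*Real.sin θ^2)^2 := by
      show 1 + ((p-q)*Real.sin θ*Real.cos θ / (q*Real.cos θ^2+p*Real.sin θ^2))^2 = _
      rw [← hE, div_pow, add_div, div_self (pow_ne_zero 2 hD2)]
    have hG : Real.sin θ ^ 2 + c + (p-q)*(q-(p+q)*Real.sin θ^2) = p*q := by
      linear_combination (Real.sin θ^2 - 1)*hq2 - Real.sin θ^2*hp2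
    have hpq : p * q ≠ 0 := by positivity
    have h1' := h1.ne'
    have e3 : 1 + 1 / ((Real.sin θ ^ 2 + c) / (q * Real.cos θ ^ 2 + p * Real.sin θ ^ 2) ^ 2) * (((p-q)*(q-(p+q)*Real.sin θ^2)) / (q * Real.cos θ ^ 2 + p * Real.sin θ ^ 2) ^ 2) = p * q / (Real.sin θ ^ 2 + c) := by
      rw [one_div_div, div_mul_div_comm, mul_comm ((q * Real.cos θ ^ 2 + p * Real.sin θ ^ 2) ^ 2) ((p-q)*(q-(p+q)*Real.sin θ^2)), mul_div_mul_right _ _ (pow_ne_zero 2 hD2), ← hG, add_div, div_self h1']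
    rw [e1, hF, e3, ← mul_div_assoc, one_div_mul_cancel hpq]
  have hcont : IntervalIntegrable (fun θ => 1 / (Real.sin θ ^ 2 + c)) MeasureTheory.volume 0 (π/2) := by
    apply Continuous.intervalIntegrable
    exact continuous_const.div (by continuity) (fun x => by positivity)
  have := intervalIntegral.integral_eq_sub_of_hasDerivAt
      (f := fun θ => (1/(p*q)) * (θ + Real.arctan ((p-q) * Real.sin θ * Real.cos θ /
        (q * Real.cos θ ^ 2 + p * Real.sin θ ^ 2))))
      (fun θ _ => key θ) hcont
  rw [this]
  simp only [Real.sin_pi_div_two, Real.cos_pi_div_two, Real.sin_zero, Real.cos_zero]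
  have hr : Real.sqrt (c * (1+c)) = q * p := by
    rw [hq, hp, ← Real.sqrt_mul hc.le]
  rw [hr]
  norm_num [Real.arctan_zero]
  ring

theorem rec_int (c : ℝ) (hc : 0 < c) (n : ℕ) :
    (2*(n:ℝ)+1) * ∫ θ in (0:ℝ)..(π/2), (Real.sin θ ^ 2)^n / (Real.sin θ ^ 2 + c)^(n+1) =
    2*((n:ℝ)+1)*(1+c) * ∫ θ in (0:ℝ)..(π/2), (Real.sin θ ^ 2)^(n+1) / (Real.sin θ ^ 2 + c)^(n+2) := by
  have hDpos : ∀ θ : ℝ, (0:ℝ) < Real.sin θ ^ 2 + c := fun θ => by positivity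
  have key : ∀ θ : ℝ, HasDerivAt
      (fun θ => Real.sin θ ^ (2*n+1) * Real.cos θ / (Real.sin θ ^ 2 + c)^(n+1))
      ((2*(n:ℝ)+1) * ((Real.sin θ ^ 2)^n / (Real.sin θ ^ 2 + c)^(n+1))
        - 2*((n:ℝ)+1)*(1+c) * ((Real.sin θ ^ 2)^(n+1) / (Real.sin θ ^ 2 + c)^(n+2))) θ := by
    intro θ
    have hsc : Real.sin θ ^ 2 + Real.cos θ ^ 2 = 1 := Real.sin_sq_add_cos_sq θ
    have hcos : Real.cos θ ^ 2 = 1 - Real.sin θ ^ 2 := by linarith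
    have hD := hDpos θ
    have hN : HasDerivAt (fun θ => Real.sin θ ^ (2*n+1) * Real.cos θ)
        (((2*n+1:ℕ) * Real.sin θ ^ (2*n) * Real.cos θ) * Real.cos θ
          + Real.sin θ ^ (2*n+1) * -Real.sin θ) θ := by
      have := ((Real.hasDerivAt_sin θ).pow (2*n+1)).mul (Real.hasDerivAt_cos θ)
      simpa [Pi.pow_def, Pi.mul_def] using this
    have hDen : HasDerivAt (fun θ => (Real.sin θ ^ 2 + c)^(n+1))
        (((n+1:ℕ) * (Real.sin θ ^ 2 + c)^n) * ((2:ℕ) * Real.sin θ ^ 1 * Real.cos θ)) θ := by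
      have h1 : HasDerivAt (fun θ => Real.sin θ ^ 2 + c) ((2:ℕ) * Real.sin θ ^ 1 * Real.cos θ) θ :=
        ((Real.hasDerivAt_sin θ).pow 2).add_const c
      have := h1.pow (n+1)
      simpa [Pi.pow_def, mul_comm, mul_assoc] using this
    have hfull := hN.div hDen (pow_ne_zero _ hD.ne')
    refine hfull.congr_deriv ?_; symm
    have hDne : (Real.sin θ ^ 2 + c) ≠ 0 := hD.ne'
    field_simp
    ring_nf
    rw [hcos]
    push_cast
    ring
  have hint : ∀ m : ℕ, IntervalIntegrable
      (fun θ => (Real.sin θ ^ 2)^m / (Real.sin θ ^ 2 + c)^(m+1)) MeasureTheory.volume 0 (π/2) := by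
    intro m
    apply Continuous.intervalIntegrable
    exact (Continuous.pow (by continuity) m).div (by continuity) (fun x => by positivity)
  have heq := intervalIntegral.integral_eq_sub_of_hasDerivAt
      (f := fun θ => Real.sin θ ^ (2*n+1) * Real.cos θ / (Real.sin θ ^ 2 + c)^(n+1))
      (fun θ _ => key θ)
      (((hint n).const_mul _).sub (((hint (n+1)).const_mul _)))
  rw [intervalIntegral.integral_sub ((hint n).const_mul _) ((hint (n+1)).const_mul _)] at heq
  rw [intervalIntegral.integral_const_mul, intervalIntegral.integral_const_mul] at heq
  simp only [Real.cos_pi_div_two, Real.sin_zero, mul_zero, zero_mul, zero_div, zero_pow] at heq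
  have h0 : ((0:ℝ) ^ (2*n+1)) = 0 := zero_pow (by omega)
  rw [h0] at heq
  norm_num at heq
  linarith [heq]

theorem K_closed (c : ℝ) (hc : 0 < c) (n : ℕ) :
    ∫ θ in (0:ℝ)..(π/2), (Real.sin θ ^ 2)^n / (Real.sin θ ^ 2 + c)^(n+1) =
      π * (Nat.choose (2*n) n : ℝ) / (2 * Real.sqrt (c*(1+c)) * (4*(1+c))^n) := by
  induction n with
  | zero =>
    simpa using base_int c hc
  | succ n ih =>
    have hrec := rec_int c hc n
    rw [ih] at hrec
    have h1 : (0:ℝ) < 1 + c := by linarith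
    have hr : (0:ℝ) < Real.sqrt (c*(1+c)) := Real.sqrt_pos.2 (by positivity)
    have hcb : ((n:ℝ)+1) * (Nat.choose (2*(n+1)) (n+1) : ℝ) = 2*(2*(n:ℝ)+1) * (Nat.choose (2*n) n : ℝ) := by
      have := Nat.succ_mul_centralBinom_succ n
      rw [Nat.centralBinom, Nat.centralBinom] at this
      exact_mod_cast congrArg (Nat.cast : ℕ → ℝ) this
    have h4 : ((4:ℝ)*(1+c))^n ≠ 0 := by positivity
    have hn1 : (0:ℝ) < (n:ℝ)+1 := by positivity
    have hB : (0:ℝ) < 2 * Real.sqrt (c*(1+c)) * (4*(1+c))^n := by positivity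
    rw [mul_div_assoc'] at hrec
    rw [div_eq_iff hB.ne'] at hrec
    have e : n+1+1 = n+2 := by omega
    rw [e, eq_div_iff (by positivity), pow_succ]
    apply mul_left_cancel₀ hn1.ne'
    linear_combination (-π) * hcb - 2 * hrec

theorem Pstep (μ : ℝ) (m : ℕ) :
    μ^(m+2) * ∑ k ∈ Finset.range (m+2), ((m+1+k).choose k : ℝ) * (1-μ)^k
  = μ^(m+1) * ∑ k ∈ Finset.range (m+1), ((m+k).choose k : ℝ) * (1-μ)^k
    - (1-2*μ)/2 * (((2*(m+1)).choose (m+1) : ℕ) : ℝ) * (μ*(1-μ))^(m+1) := by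
  set q : ℝ := 1 - μ with hqdef
  set A : ℝ := ∑ k ∈ Finset.range (m+2), ((m+1+k).choose k : ℝ) * q^k with hA
  set B : ℝ := ∑ k ∈ Finset.range (m+1), ((m+k).choose k : ℝ) * q^k with hB
  have hsplit : A = (∑ j ∈ Finset.range (m+1), ((m+1+j).choose j : ℝ) * q^(j+1))
      + (∑ j ∈ Finset.range (m+1), ((m+j+1).choose (j+1) : ℝ) * q^(j+1)) + 1 := by
    rw [hA, Finset.sum_range_succ']
    rw [← Finset.sum_add_distrib]
    congr 1
    · apply Finset.sum_congr rfl
      intro j _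
      have e1 : m+1+(j+1) = (m+j+1)+1 := by omega
      rw [e1, Nat.choose_succ_succ]
      have e2 : m+j+1 = m+1+j := by omega
      push_cast
      rw [e2]
      ring
    · simp
  have hfirst : (∑ j ∈ Finset.range (m+1), ((m+1+j).choose j : ℝ) * q^(j+1))
      = q * (A - ((2*(m+1)).choose (m+1) : ℝ) * q^(m+1)) := by
    have h1 : A = (∑ j ∈ Finset.range (m+1), ((m+1+j).choose j : ℝ) * q^j)
        + ((m+1+(m+1)).choose (m+1) : ℝ) * q^(m+1) := by
      rw [hA, Finset.sum_range_succ]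
    have e3 : m+1+(m+1) = 2*(m+1) := by omega
    rw [e3] at h1
    calc (∑ j ∈ Finset.range (m+1), ((m+1+j).choose j : ℝ) * q^(j+1))
        = q * ∑ j ∈ Finset.range (m+1), ((m+1+j).choose j : ℝ) * q^j := by
          rw [Finset.mul_sum]; exact Finset.sum_congr rfl (fun j _ => by ring)
      _ = q * (A - ((2*(m+1)).choose (m+1) : ℝ) * q^(m+1)) := by
          rw [show (∑ j ∈ Finset.range (m+1), ((m+1+j).choose j : ℝ) * q^j)
              = A - ((2*(m+1)).choose (m+1) : ℝ) * q^(m+1) by linarith]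
  have hsecond : (∑ j ∈ Finset.range (m+1), ((m+j+1).choose (j+1) : ℝ) * q^(j+1))
      = B + ((2*m+1).choose (m+1) : ℝ) * q^(m+1) - 1 := by
    have h2 : (∑ k ∈ Finset.range (m+2), ((m+k).choose k : ℝ) * q^k)
        = (∑ j ∈ Finset.range (m+1), ((m+(j+1)).choose (j+1) : ℝ) * q^(j+1))
          + ((m+0).choose 0 : ℝ) * q^0 := Finset.sum_range_succ' _ _
    have h3 : (∑ k ∈ Finset.range (m+2), ((m+k).choose k : ℝ) * q^k)
        = B + ((m+(m+1)).choose (m+1) : ℝ) * q^(m+1) := by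
      rw [hB, Finset.sum_range_succ]
    have e4 : m+(m+1) = 2*m+1 := by omega
    rw [e4] at h3
    have h5 : (∑ j ∈ Finset.range (m+1), ((m+(j+1)).choose (j+1) : ℝ) * q^(j+1))
        = (∑ j ∈ Finset.range (m+1), ((m+j+1).choose (j+1) : ℝ) * q^(j+1)) := by
      apply Finset.sum_congr rfl; intro j _; rw [show m+(j+1) = m+j+1 by omega]
    rw [h5] at h2
    simp only [Nat.choose_zero_right, Nat.cast_one, pow_zero] at h2
    linarith
  -- central binomial: C(2(m+1), m+1) = 2 * C(2m+1, m+1)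
  have hcent : ((2*(m+1)).choose (m+1) : ℝ) = 2 * ((2*m+1).choose (m+1) : ℝ) := by
    have e5 : 2*(m+1) = (2*m+1)+1 := by omega
    rw [e5, Nat.choose_succ_succ']
    have e6 : (2*m+1).choose m = (2*m+1).choose (m+1) := by
      rw [← Nat.choose_symm (by omega : m+1 ≤ 2*m+1), show 2*m+1-(m+1) = m by omega]
    push_cast [e6]
    ring
  -- combine: A*(1-q) = B + (C(2m+1,m+1) - q*C(2(m+1),m+1)) * q^(m+1)
  have hkey : A * (1 - q) = B + (((2*m+1).choose (m+1) : ℝ)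
      - q * ((2*(m+1)).choose (m+1) : ℝ)) * q^(m+1) := by
    rw [hfirst, hsecond] at hsplit
    linear_combination hsplit
  have hq1 : (1:ℝ) - q = μ := by rw [hqdef]; ring
  rw [hq1] at hkey
  calc μ^(m+2) * A = μ^(m+1) * (A * μ) := by ring
    _ = μ^(m+1) * (B + (((2*m+1).choose (m+1) : ℝ)
          - q * ((2*(m+1)).choose (m+1) : ℝ)) * q^(m+1)) := by rw [mul_comm A μ] at hkey ⊢; rw [hkey]
    _ = μ^(m+1) * B - (1-2*μ)/2 * (((2*(m+1)).choose (m+1) : ℕ) : ℝ) * (μ*q)^(m+1) := by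
        rw [mul_pow, hcent]
        linear_combination (-2 * μ^(m+1) * q^(m+1) * (((2*m+1).choose (m+1) : ℕ) : ℝ)) * hqdef

theorem Ldiff (c : ℝ) (hc : 0 < c) (n : ℕ) :
    (∫ θ in (0:ℝ)..(π/2), (Real.sin θ^2/(Real.sin θ^2+c))^(n+1))
  = (∫ θ in (0:ℝ)..(π/2), (Real.sin θ^2/(Real.sin θ^2+c))^n)
    - c * ∫ θ in (0:ℝ)..(π/2), (Real.sin θ^2)^n/(Real.sin θ^2+c)^(n+1) := by
  have hL : ∀ m : ℕ, IntervalIntegrable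
      (fun θ => (Real.sin θ^2/(Real.sin θ^2+c))^m) MeasureTheory.volume 0 (π/2) := by
    intro m
    apply Continuous.intervalIntegrable
    exact Continuous.pow ((by continuity : Continuous fun θ => Real.sin θ^2).div
      (by continuity) (fun x => by positivity)) m
  have hK : IntervalIntegrable
      (fun θ => c * ((Real.sin θ^2)^n/(Real.sin θ^2+c)^(n+1))) MeasureTheory.volume 0 (π/2) := by
    apply Continuous.intervalIntegrable
    exact continuous_const.mul ((Continuous.pow (by continuity) n).div
      (by continuity) (fun x => by positivity))
  have : (∫ θ in (0:ℝ)..(π/2), (Real.sin θ^2/(Real.sin θ^2+c))^(n+1))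
      = ∫ θ in (0:ℝ)..(π/2), ((Real.sin θ^2/(Real.sin θ^2+c))^n
          - c * ((Real.sin θ^2)^n/(Real.sin θ^2+c)^(n+1))) := by
    apply intervalIntegral.integral_congr
    intro θ _
    have hD : (0:ℝ) < Real.sin θ^2 + c := by positivity
    have hD' := hD.ne'
    have e : (Real.sin θ^2)^n/(Real.sin θ^2+c)^(n+1) = (Real.sin θ^2/(Real.sin θ^2+c))^n * (1/(Real.sin θ^2+c)) := by
      rw [div_pow, div_mul_div_comm, mul_one, pow_succ (Real.sin θ^2 + c) n]
    have e2 : Real.sin θ^2/(Real.sin θ^2+c) = 1 - c*(1/(Real.sin θ^2+c)) := by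
      rw [mul_one_div, one_sub_div hD', add_sub_cancel_right]
    beta_reduce
    rw [e, pow_succ (Real.sin θ^2/(Real.sin θ^2+c)) n, e2]
    ring
  rw [this, intervalIntegral.integral_sub (hL n) hK, intervalIntegral.integral_const_mul]

theorem main_claim (c : ℝ) (hc : 0 < c) (m : ℕ) :
    (1/π) * ∫ θ in (0:ℝ)..(π/2), (Real.sin θ^2/(Real.sin θ^2+c))^(m+1)
  = ((1/2)*(1 - Real.sqrt (c/(1+c))))^(m+1) *
      ∑ k ∈ Finset.range (m+1), ((m+k).choose k : ℝ) * (1 - (1/2)*(1 - Real.sqrt (c/(1+c))))^k := by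
  have hπ : (0:ℝ) < π := Real.pi_pos
  have h1c : (0:ℝ) < 1 + c := by linarith
  set s : ℝ := Real.sqrt (c/(1+c)) with hs
  set μ : ℝ := (1/2)*(1-s) with hμ
  have hs2 : s^2 = c/(1+c) := Real.sq_sqrt (by positivity)
  have hr : Real.sqrt (c*(1+c)) = Real.sqrt c * Real.sqrt (1+c) := Real.sqrt_mul hc.le _
  have hsc : Real.sqrt c * Real.sqrt c = c := Real.mul_self_sqrt hc.le
  have hsqc : (0:ℝ) < Real.sqrt c := Real.sqrt_pos.2 hc
  have hsq1c : (0:ℝ) < Real.sqrt (1+c) := Real.sqrt_pos.2 h1c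
  have hcr : c / Real.sqrt (c*(1+c)) = s := by
    rw [hr, hs, Real.sqrt_div hc.le, ← hsc]
    field_simp
    rw [Real.sq_sqrt (sq_nonneg (Real.sqrt c))]
  have hμq : μ * (1-μ) = 1/(4*(1+c)) := by
    have : μ * (1-μ) = (1 - s^2)/4 := by rw [hμ]; ring
    rw [this, hs2]
    field_simp
    ring
  have h2μ : 1 - 2*μ = s := by rw [hμ]; ring
  induction m with
  | zero =>
    have hL1 := Ldiff c hc 0
    have hL0 : (∫ θ in (0:ℝ)..(π/2), (Real.sin θ^2/(Real.sin θ^2+c))^0) = π/2 := by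
      simp
    have hK0 := K_closed c hc 0
    rw [hL0, hK0] at hL1
    rw [hL1]
    have hR : (0:ℝ) < Real.sqrt (c*(1+c)) := by rw [hr]; positivity
    rw [div_eq_iff hR.ne'] at hcr
    simp only [Finset.range_one, Finset.sum_singleton, Nat.choose_self, Nat.cast_one, pow_zero,
      pow_one, Nat.mul_zero, Nat.choose_zero_right, mul_one]
    field_simp
    simp only [zero_add, Finset.range_one, Finset.sum_singleton, Nat.choose_self, Nat.cast_one, pow_zero, pow_one, mul_one]
    linear_combination (-1) * hcr - 2 * Real.sqrt (c*(1+c)) * hμ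
  | succ m ih =>
    have hstep := Ldiff c hc (m+1)
    have hKm := K_closed c hc (m+1)
    rw [hKm] at hstep
    have hPs := Pstep μ m
    rw [h2μ] at hPs
    rw [hstep, mul_sub, ih, hPs]
    congr 1
    have hR : (0:ℝ) < Real.sqrt (c*(1+c)) := by rw [hr]; positivity
    rw [div_eq_iff hR.ne'] at hcr
    have hX : (0:ℝ) < (4*(1+c))^(m+1) := by positivity
    have hpow : (μ*(1-μ))^(m+1) = 1/(4*(1+c))^(m+1) := by
      rw [hμq, div_pow, one_pow]
    rw [hpow]
    field_simp
    linear_combination (((2*(m+1)).choose (m+1) : ℕ) : ℝ) * hcr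

theorem stmt_11 (a : ℝ) (ha : 0 < a) (Nr : ℕ) (hNr : 0 < Nr) :
    (1 / π) * ∫ θ in (0:ℝ)..(π / 2),
        ((4 * Real.sin θ ^ 2) / (4 * Real.sin θ ^ 2 + a)) ^ Nr =
      ((1 / 2) * (1 - Real.sqrt (a / (4 + a)))) ^ Nr *
        ∑ k ∈ Finset.range Nr,
          (Nat.choose (Nr - 1 + k) k : ℝ) *
            (1 - (1 / 2) * (1 - Real.sqrt (a / (4 + a)))) ^ k := by
  obtain ⟨m, rfl⟩ := Nat.exists_eq_succ_of_ne_zero hNr.ne'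
  set c : ℝ := a/4 with hcdef
  have hc : 0 < c := by positivity
  have harg : a / (4 + a) = c / (1 + c) := by
    rw [hcdef]
    rw [div_eq_div_iff (by linarith) (by positivity)]
    ring
  have hint : (∫ θ in (0:ℝ)..(π/2), ((4 * Real.sin θ ^ 2) / (4 * Real.sin θ ^ 2 + a)) ^ (m+1))
      = ∫ θ in (0:ℝ)..(π/2), (Real.sin θ^2/(Real.sin θ^2+c))^(m+1) := by
    apply intervalIntegral.integral_congr
    intro θ _
    have h1 : (0:ℝ) < 4 * Real.sin θ ^ 2 + a := by positivity
    have h2 : (0:ℝ) < Real.sin θ ^ 2 + c := by positivity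
    show (4 * Real.sin θ ^ 2 / (4 * Real.sin θ ^ 2 + a)) ^ (m + 1)
        = (Real.sin θ ^ 2 / (Real.sin θ ^ 2 + c)) ^ (m + 1)
    congr 1
    rw [div_eq_div_iff h1.ne' h2.ne', hcdef]
    ring
  rw [harg, hint]
  have := main_claim c hc m
  simpa using this
end

section
/- Fix a > 0 and positive integer N_r. As ρ → ∞, the ratio of (1/π)∫₀^{π/2} (4 sin²θ/(4 sin²θ + ρa))^{N_r} dθ to (1/2)(4/(ρa))^{N_r}·(2N_r−1)!!/(2N_r)!! tends to 1. -/
open Real Filter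

open Finset in
lemma df_ratio (n : ℕ) :
    (∏ i ∈ Finset.range n, ((2 * (i : ℝ) + 1) / (2 * i + 2))) =
      ((2 * n - 1).doubleFactorial : ℝ) / ((2 * n).doubleFactorial : ℝ) := by
  induction n with
  | zero => simp [Nat.doubleFactorial]
  | succ k ih =>
    have h1 : (2 * (k + 1) - 1).doubleFactorial = (2 * k + 1) * (2 * k - 1).doubleFactorial := by
      cases k with
      | zero => rfl
      | succ m =>
        have e1 : 2 * (m + 1 + 1) - 1 = 2 * m + 1 + 2 := by omega
        have e2 : 2 * (m + 1) - 1 = 2 * m + 1 := by omega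
        rw [e1, e2, Nat.doubleFactorial_add_two]
        congr 1
    have h2 : (2 * (k + 1)).doubleFactorial = (2 * k + 2) * (2 * k).doubleFactorial := by
      have : 2 * (k + 1) = 2 * k + 2 := by omega
      rw [this, Nat.doubleFactorial_add_two]
    have hpos : ((2 * k).doubleFactorial : ℝ) ≠ 0 := Nat.cast_ne_zero.mpr (Nat.doubleFactorial_pos _).ne'
    have hpos2 : ((2 * k + 2 : ℕ) : ℝ) ≠ 0 := by positivity
    rw [Finset.prod_range_succ, ih, h1, h2]
    push_cast
    field_simp

lemma half_wallis (n : ℕ) :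
    (∫ x in (0:ℝ)..(π / 2), Real.sin x ^ (2 * n)) =
      π / 2 * ∏ i ∈ Finset.range n, ((2 * (i : ℝ) + 1) / (2 * i + 2)) := by
  induction n with
  | zero => simp
  | succ k ih =>
    have h : 2 * (k + 1) = 2 * k + 2 := by omega
    rw [h, integral_sin_pow, ih, Finset.prod_range_succ]
    simp [Real.sin_pi_div_two, Real.cos_pi_div_two, Real.sin_zero]
    push_cast
    ring

theorem stmt_13 (a : ℝ) (ha : 0 < a) (Nr : ℕ) (hNr : 0 < Nr) :
    Tendsto (fun ρ : ℝ =>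
        ((1 / π) * ∫ θ in (0:ℝ)..(π / 2),
            ((4 * Real.sin θ ^ 2) / (4 * Real.sin θ ^ 2 + ρ * a)) ^ Nr) /
          ((1 / 2) * (4 / (ρ * a)) ^ Nr *
            (((2 * Nr - 1).doubleFactorial : ℝ) / ((2 * Nr).doubleFactorial : ℝ))))
      atTop (nhds 1) := by
  set c : ℝ := ((2 * Nr - 1).doubleFactorial : ℝ) / ((2 * Nr).doubleFactorial : ℝ) with hc
  have hcpos : 0 < c := by
    apply div_pos <;> exact_mod_cast Nat.doubleFactorial_pos _
  -- the auxiliary integrand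
  set F : ℝ → ℝ → ℝ := fun ρ θ =>
    Real.sin θ ^ (2 * Nr) * ((ρ * a) / (4 * Real.sin θ ^ 2 + ρ * a)) ^ Nr with hF
  -- DCT : ∫ F ρ → ∫ sin ^ (2Nr)
  have hI : Tendsto (fun ρ => ∫ θ in (0:ℝ)..(π / 2), F ρ θ) atTop
      (nhds (∫ θ in (0:ℝ)..(π / 2), Real.sin θ ^ (2 * Nr))) := by
    apply intervalIntegral.tendsto_integral_filter_of_dominated_convergence (bound := fun _ => 1)
    · filter_upwards [eventually_ge_atTop 1] with ρ hρ
      have hρa : 0 < ρ * a := by positivity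
      apply Continuous.aestronglyMeasurable
      apply Continuous.mul (by fun_prop)
      apply Continuous.pow
      apply Continuous.div (by fun_prop) (by fun_prop)
      intro θ
      have : 0 ≤ 4 * Real.sin θ ^ 2 := by positivity
      nlinarith
    · filter_upwards [eventually_ge_atTop 1] with ρ hρ
      filter_upwards with θ _
      have hρa : 0 < ρ * a := by positivity
      have hs : 0 ≤ Real.sin θ ^ 2 := sq_nonneg _
      have hd : 0 < 4 * Real.sin θ ^ 2 + ρ * a := by linarith
      have h1 : 0 ≤ (ρ * a) / (4 * Real.sin θ ^ 2 + ρ * a) := by positivity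
      have h2 : (ρ * a) / (4 * Real.sin θ ^ 2 + ρ * a) ≤ 1 := by
        rw [div_le_one hd]; linarith
      have h3 : Real.sin θ ^ (2 * Nr) ≤ 1 := by
        rw [pow_mul]
        exact pow_le_one₀ hs (by nlinarith [Real.neg_one_le_sin θ, Real.sin_le_one θ])
      have h4 : 0 ≤ Real.sin θ ^ (2 * Nr) := by rw [pow_mul]; positivity
      rw [Real.norm_eq_abs, abs_of_nonneg (by positivity)]
      have := mul_le_mul h3 (pow_le_one₀ (n := Nr) h1 h2) (by positivity) zero_le_one
      simpa using this
    · exact intervalIntegrable_const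
    · filter_upwards with θ _
      have hs : 0 ≤ Real.sin θ ^ 2 := sq_nonneg _
      have key : Tendsto (fun ρ : ℝ => (ρ * a) / (4 * Real.sin θ ^ 2 + ρ * a)) atTop (nhds 1) := by
        have h0 : Tendsto (fun ρ : ℝ => (4 * Real.sin θ ^ 2) / (4 * Real.sin θ ^ 2 + ρ * a))
            atTop (nhds 0) := by
          apply Tendsto.div_atTop tendsto_const_nhds
          apply tendsto_atTop_add_const_left
          exact Tendsto.atTop_mul_const ha tendsto_id
        have := h0.const_sub 1
        rw [sub_zero] at this
        apply this.congr'
        filter_upwards [eventually_ge_atTop 1] with ρ hρ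
        have hρa : 0 < ρ * a := by positivity
        have hd : 0 < 4 * Real.sin θ ^ 2 + ρ * a := by linarith
        field_simp
        ring
      have := (key.pow Nr).const_mul (Real.sin θ ^ (2 * Nr))
      simpa using this
  -- eventual equality of the ratio with (2/(π*c)) * ∫ F ρ
  have hπ : 0 < π := Real.pi_pos
  have heq : ∀ᶠ ρ in atTop,
      ((1 / π) * ∫ θ in (0:ℝ)..(π / 2),
          ((4 * Real.sin θ ^ 2) / (4 * Real.sin θ ^ 2 + ρ * a)) ^ Nr) /
        ((1 / 2) * (4 / (ρ * a)) ^ Nr * c) =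
      (2 / (π * c)) * ∫ θ in (0:ℝ)..(π / 2), F ρ θ := by
    filter_upwards [eventually_ge_atTop 1] with ρ hρ
    have hρa : 0 < ρ * a := by positivity
    have hint : (∫ θ in (0:ℝ)..(π / 2),
        ((4 * Real.sin θ ^ 2) / (4 * Real.sin θ ^ 2 + ρ * a)) ^ Nr) =
        (4 / (ρ * a)) ^ Nr * ∫ θ in (0:ℝ)..(π / 2), F ρ θ := by
      rw [← intervalIntegral.integral_const_mul]
      apply intervalIntegral.integral_congr
      intro θ _
      have hd : 0 < 4 * Real.sin θ ^ 2 + ρ * a := by nlinarith [sq_nonneg (Real.sin θ)]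
      simp only [hF]
      rw [pow_mul, div_pow, div_pow, div_pow, mul_pow]
      field_simp
    rw [hint]
    have h4 : (4 / (ρ * a)) ^ Nr ≠ 0 := by positivity
    field_simp
  -- conclude
  have final : Tendsto (fun ρ => (2 / (π * c)) * ∫ θ in (0:ℝ)..(π / 2), F ρ θ) atTop (nhds 1) := by
    have := hI.const_mul (2 / (π * c))
    rw [half_wallis, df_ratio, ← hc] at this
    convert this using 2
    field_simp
  exact final.congr' (by filter_upwards [heq] with ρ h using h.symm)
end

section
/- For positive reals λ₁ > 0 > λ₂ (so λ₁ − λ₂ > 0) and positive integer N_r, the quantity P = (−λ₂/(λ₁ − λ₂))^{N_r} · Σ_{k=0}^{N_r−1} C(N_r+k−1, k) (λ₁/(λ₁ − λ₂))^k lies strictly between 0 and 1. -/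
theorem stmt_19 (lam1 lam2 : ℝ) (h1 : 0 < lam1) (h2 : lam2 < 0) (Nr : ℕ) (hNr : 0 < Nr) :
    0 < (-lam2 / (lam1 - lam2)) ^ Nr *
        ∑ k ∈ Finset.range Nr,
          (Nat.choose (Nr + k - 1) k : ℝ) * (lam1 / (lam1 - lam2)) ^ k ∧
      (-lam2 / (lam1 - lam2)) ^ Nr *
        ∑ k ∈ Finset.range Nr,
          (Nat.choose (Nr + k - 1) k : ℝ) * (lam1 / (lam1 - lam2)) ^ k < 1 := by
  have hd : (0:ℝ) < lam1 - lam2 := by linarith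
  set r : ℝ := lam1 / (lam1 - lam2) with hr
  set q : ℝ := -lam2 / (lam1 - lam2) with hq
  have hr0 : 0 < r := div_pos h1 hd
  have hq0 : 0 < q := div_pos (by linarith) hd
  have hqr : q = 1 - r := by
    rw [hq, hr, eq_sub_iff_add_eq, ← add_div, div_eq_one_iff_eq hd.ne']; ring
  have hrlt : r < 1 := by
    rw [hqr] at hq0; linarith
  have hrnorm : ‖r‖ < 1 := by
    rw [Real.norm_eq_abs, abs_of_pos hr0]; exact hrlt
  -- rewrite terms as the negative binomial series terms
  have hterm : ∀ k, (Nat.choose (Nr + k - 1) k : ℝ) * r ^ k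
      = ((k + (Nr - 1)).choose (Nr - 1) : ℝ) * r ^ k := by
    intro k
    congr 2
    have h1' : Nr + k - 1 = k + (Nr - 1) := by omega
    rw [h1']
    exact (Nat.choose_symm_of_eq_add (by omega)).symm
  have hterm_pos : ∀ k, 0 < ((k + (Nr - 1)).choose (Nr - 1) : ℝ) * r ^ k := by
    intro k
    apply mul_pos _ (pow_pos hr0 k)
    exact_mod_cast Nat.choose_pos (by omega)
  have hHS := hasSum_choose_mul_geometric_of_norm_lt_one (𝕜 := ℝ) (Nr - 1) hrnorm
  have hsummable := hHS.summable
  have htsum : ∑' n, ((n + (Nr - 1)).choose (Nr - 1) : ℝ) * r ^ n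
      = 1 / (1 - r) ^ Nr := by
    rw [hHS.tsum_eq]
    congr 1
    congr 1
    omega
  have hsum_rw : ∑ k ∈ Finset.range Nr, (Nat.choose (Nr + k - 1) k : ℝ) * r ^ k
      = ∑ k ∈ Finset.range Nr, ((k + (Nr - 1)).choose (Nr - 1) : ℝ) * r ^ k :=
    Finset.sum_congr rfl fun k _ => hterm k
  have hlt : ∑ k ∈ Finset.range Nr, ((k + (Nr - 1)).choose (Nr - 1) : ℝ) * r ^ k
      < 1 / (1 - r) ^ Nr := by
    rw [← htsum]
    calc ∑ k ∈ Finset.range Nr, ((k + (Nr - 1)).choose (Nr - 1) : ℝ) * r ^ k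
        < ∑ k ∈ Finset.range (Nr + 1), ((k + (Nr - 1)).choose (Nr - 1) : ℝ) * r ^ k := by
          rw [Finset.sum_range_succ]
          linarith [hterm_pos Nr]
      _ ≤ ∑' n, ((n + (Nr - 1)).choose (Nr - 1) : ℝ) * r ^ n :=
          Summable.sum_le_tsum _ (fun k _ => (hterm_pos k).le) hsummable
  constructor
  · apply mul_pos (pow_pos hq0 Nr)
    rw [hsum_rw]
    exact Finset.sum_pos (fun k _ => hterm_pos k) ⟨0, Finset.mem_range.2 hNr⟩
  · rw [hsum_rw]
    have h1r : (1 - r) ^ Nr = q ^ Nr := by rw [hqr]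
    calc q ^ Nr * ∑ k ∈ Finset.range Nr, ((k + (Nr - 1)).choose (Nr - 1) : ℝ) * r ^ k
        < q ^ Nr * (1 / (1 - r) ^ Nr) := by
          exact mul_lt_mul_of_pos_left hlt (pow_pos hq0 Nr)
      _ = 1 := by
          rw [h1r]
          field_simp
end
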